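/- Assume that C is symmetrizable with positive symmetrizer d_1,…,d_r (d_jC_{jk} = d_kC_{kj}), that C is invertible over ℚ, and that the Coxeter graph of C (the graph on {1,…,r} with an edge {j,k} whenever j ≠ k and C_{jk} ≠ 0) is a forest. Let D̃ be the diagonal Ĩ×Ĩ matrix with D̃_{a,a} = d_{|a|}. Then for every Coxeter double word 𝐢 the matrix B̃_𝐢 is invertible, and the unique matrix Λ with Λ·B̃_𝐢 = −D̃, namely Λ = −D̃·(B̃_𝐢)^{−1}, satisfies Λ_{j,k} − Λ_{−j,k} − Λ_{j,−k} + Λ_{−j,−k} = 0 for all j, k ∈ {1,…,r} (Corollary 3.16). -/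

import Mathlib

open Classical

noncomputable section

/-- The indicator `δ_P` of a proposition, as a rational number. -/
def dd (P : Prop) : ℚ := if P then 1 else 0

/-- The exchange matrix `B̃_𝐢`, as a function of `a b : ℤ` (the meaningful entries are
those with `a, b ∈ Ĩ = {-r,…,-1,1,…,r}`).  Here `C` is the (generalized Cartan) matrix,
`jm j = j₋`, `jp j = j₊` and `eps j = ε_j`. -/
def Btilde (C : ℕ → ℕ → ℤ) (jm jp : ℕ → ℕ) (eps : ℕ → ℚ) (a b : ℤ) : ℚ :=
  (C a.natAbs b.natAbs : ℚ) / 2 *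
    (if a < 0 then
      (if b < 0 then
        eps b.natAbs * (dd (jm a.natAbs < jm b.natAbs ∧ jm b.natAbs < jp a.natAbs)
            + dd (jm a.natAbs < jp b.natAbs ∧ jp b.natAbs < jp a.natAbs))
          - eps a.natAbs * (dd (jm b.natAbs < jm a.natAbs ∧ jm a.natAbs < jp b.natAbs)
            + dd (jm b.natAbs < jp a.natAbs ∧ jp a.natAbs < jp b.natAbs))
      else
        -(eps a.natAbs * (2 * dd (a.natAbs = b.natAbs) + dd (jm a.natAbs < jm b.natAbs)
            + dd (jp a.natAbs < jm b.natAbs) + dd (jp b.natAbs < jm a.natAbs)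
            + dd (jp b.natAbs < jp a.natAbs))
          + eps b.natAbs * (dd (jm a.natAbs < jm b.natAbs ∧ jm b.natAbs < jp a.natAbs)
            + dd (jm a.natAbs < jp b.natAbs ∧ jp b.natAbs < jp a.natAbs))))
    else
      (if b < 0 then
        eps b.natAbs * (2 * dd (a.natAbs = b.natAbs) + dd (jm b.natAbs < jm a.natAbs)
            + dd (jp b.natAbs < jm a.natAbs) + dd (jp a.natAbs < jm b.natAbs)
            + dd (jp a.natAbs < jp b.natAbs))
          + eps a.natAbs * (dd (jm b.natAbs < jm a.natAbs ∧ jm a.natAbs < jp b.natAbs)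
            + dd (jm b.natAbs < jp a.natAbs ∧ jp a.natAbs < jp b.natAbs))
      else
        eps a.natAbs * (dd (jm a.natAbs < jm b.natAbs) + dd (jp a.natAbs < jm b.natAbs)
            + dd (jp b.natAbs < jm a.natAbs) + dd (jp b.natAbs < jp a.natAbs))
          - eps b.natAbs * (dd (jm b.natAbs < jm a.natAbs) + dd (jp b.natAbs < jm a.natAbs)
            + dd (jp a.natAbs < jm b.natAbs) + dd (jp a.natAbs < jp b.natAbs))))

/-- `w` is a Coxeter double word: the positions `1,…,2r` are mapped bijectively onto
`Ĩ = {-r,…,-1,1,…,r}`. -/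
def IsCoxWord (r : ℕ) (w : ℕ → ℤ) : Prop :=
  (∀ m, 1 ≤ m → m ≤ 2 * r → w m ≠ 0 ∧ (w m).natAbs ≤ r) ∧
    ∀ a : ℤ, a ≠ 0 → a.natAbs ≤ r → ∃! m, 1 ≤ m ∧ m ≤ 2 * r ∧ w m = a

/-- `jm j = j₋ < j₊ = jp j` are the two positions of the word `w` carrying a letter of
absolute value `j`, and `eps j = ε_j = 1` if `w j₋ > 0` and `-1` otherwise. -/
def PosData (r : ℕ) (w : ℕ → ℤ) (jm jp : ℕ → ℕ) (eps : ℕ → ℚ) : Prop :=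
  ∀ j, 1 ≤ j → j ≤ r →
    1 ≤ jm j ∧ jm j < jp j ∧ jp j ≤ 2 * r ∧
      (w (jm j)).natAbs = j ∧ (w (jp j)).natAbs = j ∧
      eps j = (if 0 < w (jm j) then 1 else -1)

/-- `C` is an `r × r` generalized Cartan matrix (on the indices `1,…,r`). -/
def IsGCM (r : ℕ) (C : ℕ → ℕ → ℤ) : Prop :=
  (∀ j, 1 ≤ j → j ≤ r → C j j = 2) ∧
    (∀ j k, 1 ≤ j → j ≤ r → 1 ≤ k → k ≤ r → j ≠ k → C j k ≤ 0) ∧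
    (∀ j k, 1 ≤ j → j ≤ r → 1 ≤ k → k ≤ r → (C j k = 0 ↔ C k j = 0))

/-- Matrix mutation at the index `m`:
`μ_m(B)_{a,b} = -B_{a,b}` if `a = m` or `b = m`, and otherwise
`μ_m(B)_{a,b} = B_{a,b} + sgn(B_{a,m})·max(B_{a,m}·B_{m,b}, 0)`. -/
def mutB (m : ℤ) (B : ℤ → ℤ → ℚ) : ℤ → ℤ → ℚ := fun a b =>
  if a = m ∨ b = m then -B a b
  else B a b +
    (if 0 < B a m then (1 : ℚ) else if B a m < 0 then -1 else 0) * max (B a m * B m b) 0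

/-- The Coxeter graph of `C`: the (simple) graph on `{1,…,r}` with an edge `{j,k}`
whenever `j ≠ k` and `C_{jk} ≠ 0` (equivalently, by the GCM axioms, `C_{kj} ≠ 0`). -/
def coxGraph (r : ℕ) (C : ℕ → ℕ → ℤ) : SimpleGraph ℕ where
  Adj j k := j ≠ k ∧ 1 ≤ j ∧ j ≤ r ∧ 1 ≤ k ∧ k ≤ r ∧ (C j k ≠ 0 ∨ C k j ≠ 0)
  symm := by
    refine ⟨?_⟩
    rintro j k ⟨h1, h2, h3, h4, h5, h6⟩
    exact ⟨h1.symm, h4, h5, h2, h3, h6.symm⟩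
  loopless := by
    refine ⟨?_⟩
    intro j h
    exact h.1 rfl

/-- The enumeration `Fin (2r) → Ĩ`, `m ↦ -(m+1)` for `m < r` and `m ↦ m - r + 1` for
`m ≥ r`. -/
def iotaI (r : ℕ) (m : Fin (2 * r)) : ℤ :=
  if (m : ℕ) < r then -(((m : ℕ) : ℤ) + 1) else (((m : ℕ) - r : ℕ) : ℤ) + 1

section Aux

open Matrix

lemma tri (x a b : ℕ) (hab : a < b) (h1 : x ≠ a) (h2 : x ≠ b) :
    dd (x < a) + dd (a < x ∧ x < b) + dd (b < x) = 1 := by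
  unfold dd
  split_ifs <;> first | (exfalso; omega) | norm_num

variable (C : ℕ → ℕ → ℤ) (jm jp : ℕ → ℕ) (eps : ℕ → ℚ) (j l : ℕ)

lemma colPos (hj : 1 ≤ j) (hl : 1 ≤ l) (hjj : jm j < jp j) (hll : jm l < jp l)
    (hne : j ≠ l → jm j ≠ jm l ∧ jm j ≠ jp l ∧ jp j ≠ jm l ∧ jp j ≠ jp l) :
    Btilde C jm jp eps (j : ℤ) (l : ℤ) + Btilde C jm jp eps (j : ℤ) (-(l : ℤ)) =
      eps j * (C j l : ℚ) := by
  have hj0 : ¬ ((j:ℤ) < 0) := by omega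
  have hl0 : ¬ ((l:ℤ) < 0) := by omega
  have hml : (-(l:ℤ)) < 0 := by omega
  simp only [Btilde, if_neg hj0, if_neg hl0, if_pos hml, Int.natAbs_neg, Int.natAbs_natCast]
  rcases eq_or_ne j l with rfl | hjl
  · simp only [dd]
    split_ifs <;> first | (exfalso; omega) | ring1
  · obtain ⟨d1, d2, d3, d4⟩ := hne hjl
    have t1 := tri (jm j) (jm l) (jp l) hll d1 d2
    have t2 := tri (jp j) (jm l) (jp l) hll d3 d4
    have hd0 : dd (j = l) = 0 := by simp [dd, hjl]
    linear_combination ((C j l : ℚ)/2) * eps j * t1 + ((C j l : ℚ)/2) * eps j * t2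
      + (C j l : ℚ) * eps l * hd0

lemma colNeg (hj : 1 ≤ j) (hl : 1 ≤ l) (hjj : jm j < jp j) (hll : jm l < jp l)
    (hne : j ≠ l → jm j ≠ jm l ∧ jm j ≠ jp l ∧ jp j ≠ jm l ∧ jp j ≠ jp l) :
    Btilde C jm jp eps (-(j : ℤ)) (l : ℤ) + Btilde C jm jp eps (-(j : ℤ)) (-(l : ℤ)) =
      -eps j * (C j l : ℚ) := by
  have hmj : (-(j:ℤ)) < 0 := by omega
  have hl0 : ¬ ((l:ℤ) < 0) := by omega
  have hml : (-(l:ℤ)) < 0 := by omega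
  simp only [Btilde, if_pos hmj, if_neg hl0, if_pos hml, Int.natAbs_neg, Int.natAbs_natCast]
  rcases eq_or_ne j l with rfl | hjl
  · simp only [dd]
    split_ifs <;> first | (exfalso; omega) | ring1
  · obtain ⟨d1, d2, d3, d4⟩ := hne hjl
    have t1 := tri (jm j) (jm l) (jp l) hll d1 d2
    have t2 := tri (jp j) (jm l) (jp l) hll d3 d4
    have hd0 : dd (j = l) = 0 := by simp [dd, hjl]
    linear_combination (-(C j l : ℚ)/2) * eps j * t1 + (-(C j l : ℚ)/2) * eps j * t2
      - (C j l : ℚ) * eps j * hd0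

lemma rowNeg (hj : 1 ≤ j) (hl : 1 ≤ l) (hjj : jm j < jp j) (hll : jm l < jp l)
    (hne : j ≠ l → jm j ≠ jm l ∧ jm j ≠ jp l ∧ jp j ≠ jm l ∧ jp j ≠ jp l) :
    Btilde C jm jp eps (j : ℤ) (-(l : ℤ)) + Btilde C jm jp eps (-(j : ℤ)) (-(l : ℤ)) =
      eps l * (C j l : ℚ) := by
  have hmj : (-(j:ℤ)) < 0 := by omega
  have hj0 : ¬ ((j:ℤ) < 0) := by omega
  have hml : (-(l:ℤ)) < 0 := by omega
  simp only [Btilde, if_pos hmj, if_neg hj0, if_pos hml, Int.natAbs_neg, Int.natAbs_natCast]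
  rcases eq_or_ne j l with rfl | hjl
  · simp only [dd]
    split_ifs <;> first | (exfalso; omega) | ring1
  · obtain ⟨d1, d2, d3, d4⟩ := hne hjl
    have t1 := tri (jm l) (jm j) (jp j) hjj d1.symm d3.symm
    have t2 := tri (jp l) (jm j) (jp j) hjj d2.symm d4.symm
    have hd0 : dd (j = l) = 0 := by simp [dd, hjl]
    linear_combination ((C j l : ℚ)/2) * eps l * t1 + ((C j l : ℚ)/2) * eps l * t2
      + (C j l : ℚ) * eps l * hd0

lemma blockinv {r : ℕ} (Pm A A' Ai A'i : Matrix (Fin r) (Fin r) ℚ)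
    (hAAi : A * Ai = 1) (hA'A'i : A' * A'i = 1) :
    (fromBlocks Pm (-A - Pm) (A' - Pm) (A - A' + Pm)) *
      (fromBlocks (Ai * (Pm * A'i) + A'i - Ai) (Ai * (Pm * A'i) + A'i)
        (Ai * (Pm * A'i) - Ai) (Ai * (Pm * A'i))) = 1 := by
  have c1 : ∀ X : Matrix (Fin r) (Fin r) ℚ, A * (Ai * X) = X := by
    intro X; rw [← Matrix.mul_assoc, hAAi, Matrix.one_mul]
  have c2 : ∀ X : Matrix (Fin r) (Fin r) ℚ, A' * (A'i * X) = X := by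
    intro X; rw [← Matrix.mul_assoc, hA'A'i, Matrix.one_mul]
  rw [fromBlocks_multiply, ← fromBlocks_one, Matrix.fromBlocks_inj]
  refine ⟨?_, ?_, ?_, ?_⟩ <;>
    · simp only [mul_add, mul_sub, add_mul, sub_mul, neg_mul, mul_assoc, c1, c2, hAAi, hA'A'i]
      abel

end Aux

set_option maxHeartbeats 1000000 in
/-- Corollary 3.16: under the stated hypotheses, `B̃_𝐢` is invertible and the unique
matrix `Λ` with `Λ·B̃_𝐢 = -D̃`, namely `Λ = -D̃·B̃_𝐢⁻¹`, satisfies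
`Λ_{j,k} - Λ_{-j,k} - Λ_{j,-k} + Λ_{-j,-k} = 0` for all `j, k ∈ {1,…,r}`.
In the enumeration `iotaI`, the index `-j ∈ Ĩ` corresponds to `j - 1 : Fin (2r)` and
`j ∈ Ĩ` corresponds to `r + j - 1 : Fin (2r)`. -/


theorem stmt_19 (r : ℕ) (hr : 1 ≤ r) (C : ℕ → ℕ → ℤ) (hC : IsGCM r C)
    (d : ℕ → ℚ) (hdpos : ∀ j, 1 ≤ j → j ≤ r → 0 < d j)
    (hdsym : ∀ j k, 1 ≤ j → j ≤ r → 1 ≤ k → k ≤ r →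
      d j * (C j k : ℚ) = d k * (C k j : ℚ))
    (hCinv : IsUnit (Matrix.of fun p q : Fin r => (C ((p : ℕ) + 1) ((q : ℕ) + 1) : ℚ)))
    (hforest : (coxGraph r C).IsAcyclic)
    (w : ℕ → ℤ) (hw : IsCoxWord r w)
    (jm jp : ℕ → ℕ) (eps : ℕ → ℚ) (hpos : PosData r w jm jp eps) :
    let Bm : Matrix (Fin (2 * r)) (Fin (2 * r)) ℚ :=
      Matrix.of fun p q => Btilde C jm jp eps (iotaI r p) (iotaI r q)
    let Λ : Matrix (Fin (2 * r)) (Fin (2 * r)) ℚ :=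
      -((Matrix.diagonal fun p => d (iotaI r p).natAbs) * Bm⁻¹)
    IsUnit Bm ∧
      ∀ (j k : ℕ) (hj1 : 1 ≤ j) (hj2 : j ≤ r) (hk1 : 1 ≤ k) (hk2 : k ≤ r),
        Λ ⟨r + j - 1, by omega⟩ ⟨r + k - 1, by omega⟩
          - Λ ⟨j - 1, by omega⟩ ⟨r + k - 1, by omega⟩
          - Λ ⟨r + j - 1, by omega⟩ ⟨k - 1, by omega⟩
          + Λ ⟨j - 1, by omega⟩ ⟨k - 1, by omega⟩ = 0 := by
  intro Bm Λ
  have hBmA : ∀ p q, Bm p q = Btilde C jm jp eps (iotaI r p) (iotaI r q) := fun _ _ => rfl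
  have hmp : ∀ j, 1 ≤ j → j ≤ r → jm j < jp j := fun j h1 h2 => (hpos j h1 h2).2.1
  have hdist : ∀ j l, 1 ≤ j → j ≤ r → 1 ≤ l → l ≤ r → j ≠ l →
      jm j ≠ jm l ∧ jm j ≠ jp l ∧ jp j ≠ jm l ∧ jp j ≠ jp l := by
    intro j l hj1 hj2 hl1 hl2 hne
    obtain ⟨-, -, -, hj4, hj5, -⟩ := hpos j hj1 hj2
    obtain ⟨-, -, -, hl4, hl5, -⟩ := hpos l hl1 hl2
    refine ⟨?_, ?_, ?_, ?_⟩ <;> intro h <;> apply hne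
    · rw [← hj4, h, hl4]
    · rw [← hj4, h, hl5]
    · rw [← hj5, h, hl4]
    · rw [← hj5, h, hl5]
  have hepssq : ∀ p : Fin r, eps ((p:ℕ)+1) * eps ((p:ℕ)+1) = 1 := by
    intro p
    have hlt := p.isLt
    obtain ⟨-, -, -, -, -, he⟩ := hpos ((p:ℕ)+1) (by omega) (by omega)
    rw [he]; split_ifs <;> norm_num
  set e : Fin r ⊕ Fin r ≃ Fin (2*r) := finSumFinEquiv.trans (finCongr (by omega)) with hedef
  have hvalL : ∀ p : Fin r, ((e (Sum.inl p)) : ℕ) = (p:ℕ) := by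
    intro p; simp [hedef, finCongr_apply]
  have hvalR : ∀ p : Fin r, ((e (Sum.inr p)) : ℕ) = r + (p:ℕ) := by
    intro p; simp [hedef, finCongr_apply]; omega
  have hiotaL : ∀ p : Fin r, iotaI r (e (Sum.inl p)) = -(((p:ℕ):ℤ)+1) := by
    intro p
    rw [iotaI, hvalL p, if_pos p.isLt]
  have hiotaR : ∀ p : Fin r, iotaI r (e (Sum.inr p)) = ((p:ℕ):ℤ)+1 := by
    intro p
    rw [iotaI, hvalR p, if_neg (by omega)]
    have hh : r + (p:ℕ) - r = (p:ℕ) := by omega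
    rw [hh]
  set Cq : Matrix (Fin r) (Fin r) ℚ :=
    Matrix.of (fun p q : Fin r => (C ((p:ℕ)+1) ((q:ℕ)+1) : ℚ)) with hCqdef
  have hCu : IsUnit Cq := hCinv
  obtain ⟨u, hu⟩ := hCu
  set Ci : Matrix (Fin r) (Fin r) ℚ := ↑u⁻¹ with hCidef
  have hCi1 : Cq * Ci = 1 := by rw [← hu, hCidef]; exact u.mul_inv
  set E : Matrix (Fin r) (Fin r) ℚ :=
    Matrix.diagonal (fun p : Fin r => eps ((p:ℕ)+1)) with hEdef
  have hE : E * E = 1 := by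
    have hfun : (fun p : Fin r => eps ((p:ℕ)+1) * eps ((p:ℕ)+1)) = fun _ => (1:ℚ) :=
      funext hepssq
    rw [hEdef, Matrix.diagonal_mul_diagonal, hfun, Matrix.diagonal_one]
  have hAAi : (E * Cq) * (Ci * E) = 1 := by
    calc (E*Cq)*(Ci*E) = E*((Cq*Ci)*E) := by rw [Matrix.mul_assoc, Matrix.mul_assoc]
    _ = E*E := by rw [hCi1, Matrix.one_mul]
    _ = 1 := hE
  have hA'A'i : (Cq * E) * (E * Ci) = 1 := by
    calc (Cq*E)*(E*Ci) = Cq*((E*E)*Ci) := by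
          rw [Matrix.mul_assoc, ← Matrix.mul_assoc E E Ci]
    _ = Cq*Ci := by rw [hE, Matrix.one_mul]
    _ = 1 := hCi1
  set Pm : Matrix (Fin r) (Fin r) ℚ :=
    Matrix.of (fun p q => Bm (e (Sum.inl p)) (e (Sum.inl q))) with hPmdef
  have hEC : ∀ p q : Fin r, (E * Cq) p q
      = eps ((p:ℕ)+1) * (C ((p:ℕ)+1) ((q:ℕ)+1) : ℚ) := by
    intro p q; rw [hEdef, Matrix.diagonal_mul]; rfl
  have hCE : ∀ p q : Fin r, (Cq * E) p q
      = (C ((p:ℕ)+1) ((q:ℕ)+1) : ℚ) * eps ((q:ℕ)+1) := by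
    intro p q; rw [hEdef, Matrix.mul_diagonal]; rfl
  have hB2 : Bm.submatrix e e =
      Matrix.fromBlocks Pm (-(E*Cq) - Pm) ((Cq*E) - Pm) ((E*Cq) - (Cq*E) + Pm) := by
    ext x y
    rcases x with p | p <;> rcases y with q | q
    · rfl
    · have hp := p.isLt
      have hq := q.isLt
      have hc := colNeg C jm jp eps ((p:ℕ)+1) ((q:ℕ)+1) (by omega) (by omega)
        (hmp _ (by omega) (by omega)) (hmp _ (by omega) (by omega))
        (fun h => hdist _ _ (by omega) (by omega) (by omega) (by omega) h)
      push_cast at hc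
      rw [Matrix.submatrix_apply, Matrix.fromBlocks_apply₁₂, Matrix.sub_apply,
        Matrix.neg_apply, hEC, hPmdef]
      simp only [Matrix.of_apply, hBmA, hiotaL, hiotaR]
      linear_combination hc
    · have hp := p.isLt
      have hq := q.isLt
      have hc := rowNeg C jm jp eps ((p:ℕ)+1) ((q:ℕ)+1) (by omega) (by omega)
        (hmp _ (by omega) (by omega)) (hmp _ (by omega) (by omega))
        (fun h => hdist _ _ (by omega) (by omega) (by omega) (by omega) h)
      push_cast at hc
      rw [Matrix.submatrix_apply, Matrix.fromBlocks_apply₂₁, Matrix.sub_apply,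
        hCE, hPmdef]
      simp only [Matrix.of_apply, hBmA, hiotaL, hiotaR]
      linear_combination hc
    · have hp := p.isLt
      have hq := q.isLt
      have hc1 := colPos C jm jp eps ((p:ℕ)+1) ((q:ℕ)+1) (by omega) (by omega)
        (hmp _ (by omega) (by omega)) (hmp _ (by omega) (by omega))
        (fun h => hdist _ _ (by omega) (by omega) (by omega) (by omega) h)
      have hc2 := rowNeg C jm jp eps ((p:ℕ)+1) ((q:ℕ)+1) (by omega) (by omega)
        (hmp _ (by omega) (by omega)) (hmp _ (by omega) (by omega))
        (fun h => hdist _ _ (by omega) (by omega) (by omega) (by omega) h)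
      push_cast at hc1 hc2
      rw [Matrix.submatrix_apply, Matrix.fromBlocks_apply₂₂, Matrix.add_apply,
        Matrix.sub_apply, hEC, hCE, hPmdef]
      simp only [Matrix.of_apply, hBmA, hiotaL, hiotaR]
      linear_combination hc1 - hc2
  set G2 : Matrix (Fin r ⊕ Fin r) (Fin r ⊕ Fin r) ℚ :=
    Matrix.fromBlocks ((Ci*E) * (Pm * (E*Ci)) + (E*Ci) - (Ci*E))
      ((Ci*E) * (Pm * (E*Ci)) + (E*Ci)) ((Ci*E) * (Pm * (E*Ci)) - (Ci*E))
      ((Ci*E) * (Pm * (E*Ci))) with hG2def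
  have hBG2 : Bm.submatrix e e * G2 = 1 := by
    rw [hB2, hG2def]
    exact blockinv Pm (E*Cq) (Cq*E) (Ci*E) (E*Ci) hAAi hA'A'i
  set G : Matrix (Fin (2*r)) (Fin (2*r)) ℚ := G2.submatrix e.symm e.symm with hGdef
  have hBmsub : (Bm.submatrix e e).submatrix e.symm e.symm = Bm := by
    ext p q
    rw [Matrix.submatrix_apply, Matrix.submatrix_apply, Equiv.apply_symm_apply,
      Equiv.apply_symm_apply]
  have hBG : Bm * G = 1 := by
    rw [hGdef, ← hBmsub, Matrix.submatrix_mul_equiv, hBG2, Matrix.submatrix_one_equiv]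
  have hGB : G * Bm = 1 := mul_eq_one_comm.mp hBG
  have hUnit : IsUnit Bm := ⟨⟨Bm, G, hBG, hGB⟩, rfl⟩
  have hInv : Bm⁻¹ = G := Matrix.inv_eq_right_inv hBG
  refine ⟨hUnit, ?_⟩
  intro j k hj1 hj2 hk1 hk2
  have hGe : ∀ x y : Fin r ⊕ Fin r, G (e x) (e y) = G2 x y := by
    intro x y
    rw [hGdef, Matrix.submatrix_apply, Equiv.symm_apply_apply, Equiv.symm_apply_apply]
  have hLam : ∀ (x y : Fin r ⊕ Fin r), Λ (e x) (e y)
      = -(d ((iotaI r (e x)).natAbs) * G2 x y) := by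
    intro x y
    show (-((Matrix.diagonal fun p => d (iotaI r p).natAbs) * Bm⁻¹)) (e x) (e y) = _
    rw [hInv, Matrix.neg_apply, Matrix.diagonal_mul, hGe]
  have ii : ∀ (m : ℕ), 1 ≤ m → m ≤ r →
      ∀ (h1 : r + m - 1 < 2*r) (h2 : m - 1 < 2*r) (h3 : m - 1 < r),
        ((⟨r + m - 1, h1⟩ : Fin (2*r)) = e (Sum.inr ⟨m-1, h3⟩))
          ∧ ((⟨m - 1, h2⟩ : Fin (2*r)) = e (Sum.inl ⟨m-1, h3⟩)) := by
    intro m hm1 hm2 h1 h2 h3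
    constructor
    · rw [Fin.ext_iff, hvalR]
      show r + m - 1 = r + (m-1)
      omega
    · rw [Fin.ext_iff, hvalL]
  have nn : ∀ (m : ℕ), 1 ≤ m → m ≤ r → ∀ (h3 : m - 1 < r),
      ((iotaI r (e (Sum.inr ⟨m-1, h3⟩))).natAbs) = m
        ∧ ((iotaI r (e (Sum.inl ⟨m-1, h3⟩))).natAbs) = m := by
    intro m hm1 hm2 h3
    have hv : ((⟨m-1, h3⟩ : Fin r) : ℕ) = m - 1 := rfl
    constructor
    · rw [hiotaR, hv]
      omega
    · rw [hiotaL, hv]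
      omega
  rw [(ii j hj1 hj2 (by omega) (by omega) (by omega)).1,
    (ii j hj1 hj2 (by omega) (by omega) (by omega)).2,
    (ii k hk1 hk2 (by omega) (by omega) (by omega)).1,
    (ii k hk1 hk2 (by omega) (by omega) (by omega)).2,
    hLam, hLam, hLam, hLam,
    (nn j hj1 hj2 (by omega)).1, (nn j hj1 hj2 (by omega)).2]
  simp only [hG2def, Matrix.fromBlocks_apply₁₁, Matrix.fromBlocks_apply₁₂,
    Matrix.fromBlocks_apply₂₁, Matrix.fromBlocks_apply₂₂, Matrix.add_apply,
    Matrix.sub_apply]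
  ring
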